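/- Let F be a field, n ≥ 1, d : Fin n → F with d i ≠ 0 for all i, and c : Fin n → F with c i ≠ 0 for all i. Let M : Matrix (Fin n) (Fin (n+1)) F be the matrix whose first n columns form the diagonal matrix with diagonal entries d (i.e., M i j = d i if i = j < n, and 0 if i ≠ j < n) and whose last column is c. Then the full family of columns of M is minimally dependent. -/

import Mathlib

/-- The full family of columns of a matrix `M : Matrix V E F` is *minimally dependent*
if it is linearly dependent but the columns indexed by any proper subset of `E` are
linearly independent. -/
def MinimallyDependent {F V E : Type*} [Field F] (M : Matrix V E F) : Prop :=
  (¬ LinearIndependent F fun e : E => fun v => M v e) ∧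
    ∀ S : Set E, S ⊂ Set.univ →
      LinearIndependent F fun e : S => fun v => M v e.1

/-- The incidence matrix of a single `n`-edge with a `1`-edge attached at each of its
vertices — an `n × (n+1)` matrix whose first `n` columns form a diagonal matrix with
nonzero diagonal `d` and whose last column `c` has all entries nonzero — has minimally
dependent columns. -/
theorem minimallyDependent_diagonal_with_full_column
    {F : Type*} [Field F] {n : ℕ} (hn : 1 ≤ n)
    (d : Fin n → F) (hd : ∀ i, d i ≠ 0) (c : Fin n → F) (hc : ∀ i, c i ≠ 0)
    (M : Matrix (Fin n) (Fin (n + 1)) F)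
    (hdiag : ∀ i j : Fin n, M i j.castSucc = if i = j then d i else 0)
    (hlast : ∀ i : Fin n, M i (Fin.last n) = c i) :
    MinimallyDependent M := by
  constructor
  · rw [Fintype.not_linearIndependent_iff]
    refine ⟨fun e => Fin.lastCases (-1) (fun j => c j * (d j)⁻¹) e, ?_, Fin.last n, ?_⟩
    · funext i
      simp only [Finset.sum_apply, Pi.smul_apply, smul_eq_mul, Pi.zero_apply]
      rw [Fin.sum_univ_castSucc]
      simp only [Fin.lastCases_castSucc, Fin.lastCases_last, hdiag, hlast]
      rw [Finset.sum_eq_single i]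
      · field_simp
        rw [if_pos trivial, div_self (hd i)]; ring
      · intro b _ hb
        rw [if_neg (Ne.symm hb), mul_zero]
      · intro h; exact absurd (Finset.mem_univ i) h
    · simp
  · intro S hS
    obtain ⟨e₀, -, he₀⟩ := Set.exists_of_ssubset hS
    haveI := Classical.dec
    rw [linearIndependent_iff']
    intro t g hg e he
    have key : ∀ i : Fin n, (∑ x ∈ t, g x • fun v => M v x.1) i = 0 := by
      intro i; rw [hg]; rfl
    -- first handle the coefficient of the last column if present
    have glast : ∀ (hm : Fin.last n ∈ S), (∀ x ∈ t, x.1 = Fin.last n → g x = 0) := by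
      intro hm x hx hxl
      -- e₀ ∉ S; if e₀ = last then x.1 = last ∈ S contradiction
      rcases Fin.eq_castSucc_or_eq_last e₀ with ⟨j₀, rfl⟩ | rfl
      · have := key j₀
        simp only [Finset.sum_apply, Pi.smul_apply, smul_eq_mul] at this
        rw [Finset.sum_eq_single x] at this
        · rw [hxl, hlast] at this
          exact (mul_eq_zero.mp this).resolve_right (hc j₀)
        · intro b hb hbx
          rcases Fin.eq_castSucc_or_eq_last b.1 with ⟨j, hj⟩ | hj
          · rw [hj, hdiag]
            have : (j₀ : Fin n) ≠ j := by
              rintro rfl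
              exact he₀ (hj ▸ b.2)
            rw [if_neg this, mul_zero]
          · exfalso; apply hbx
            exact Subtype.ext (hj.trans hxl.symm)
        · intro h; exact absurd hx h
      · exact absurd (hxl ▸ x.2) he₀
    -- now the diagonal coefficients
    rcases Fin.eq_castSucc_or_eq_last e.1 with ⟨j, hj⟩ | hj
    · have := key j
      simp only [Finset.sum_apply, Pi.smul_apply, smul_eq_mul] at this
      rw [Finset.sum_eq_single e] at this
      · rw [hj, hdiag, if_pos rfl] at this
        exact (mul_eq_zero.mp this).resolve_right (hd j)
      · intro b hb hbe
        rcases Fin.eq_castSucc_or_eq_last b.1 with ⟨j', hj'⟩ | hj'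
        · rw [hj', hdiag]
          have : (j : Fin n) ≠ j' := by
            rintro rfl
            exact hbe (Subtype.ext (hj'.trans hj.symm))
          rw [if_neg this, mul_zero]
        · rw [glast (hj' ▸ b.2) b hb hj', zero_mul]
      · intro h; exact absurd he h
    · exact glast (hj ▸ e.2) e he hj
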